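/- Let K ⊆ L be a purely inseparable algebraic field extension and let A be a commutative K-algebra. Then the canonical map Spec(A ⊗_K L) → Spec(A) induced by A → A ⊗_K L is a homeomorphism of topological spaces (in particular it is a bijection on prime ideals). -/

import Mathlib

open TensorProduct

/-- If `L/K` is a purely inseparable (algebraic) field extension and `A` is a commutative
`K`-algebra, then the canonical map `Spec (A ⊗[K] L) → Spec A` induced by `a ↦ a ⊗ 1`
is a homeomorphism. -/
theorem primeSpectrum_comap_isHomeomorph_of_purelyInseparable
    (K L : Type*) [Field K] [Field L] [Algebra K L] [Algebra.IsAlgebraic K L]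
    [IsPurelyInseparable K L]
    (A : Type*) [CommRing A] [Algebra K A] :
    IsHomeomorph (PrimeSpectrum.comap
      (Algebra.TensorProduct.includeLeftRingHom : A →+* A ⊗[K] L)) := by
  set f : A →+* A ⊗[K] L := Algebra.TensorProduct.includeLeftRingHom with hf
  rcases subsingleton_or_nontrivial A with hA | hA
  · haveI : Subsingleton (A ⊗[K] L) := by
      constructor; intro x y; exact Subsingleton.elim x y
    haveI : IsEmpty (PrimeSpectrum A) := inferInstance
    haveI : IsEmpty (PrimeSpectrum (A ⊗[K] L)) := inferInstance
    refine ⟨PrimeSpectrum.continuous_comap f, ?_, ?_, ?_⟩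
    · intro s _; simp [Set.eq_empty_of_isEmpty ((PrimeSpectrum.comap f) '' s)]
    · intro x; exact absurd x.2 (by exact (IsEmpty.false x).elim)
    · intro x; exact (IsEmpty.false x).elim
  -- A is nontrivial
  have hfinj : Function.Injective f := by
    have h1 : Function.Injective (Algebra.linearMap K L) := (algebraMap K L).injective
    have h2 : Function.Injective (LinearMap.lTensor A (Algebra.linearMap K L)) :=
      Module.Flat.lTensor_preserves_injective_linearMap _ h1
    intro x y hxy
    have : (LinearMap.lTensor A (Algebra.linearMap K L)) (x ⊗ₜ (1 : K)) =
        (LinearMap.lTensor A (Algebra.linearMap K L)) (y ⊗ₜ (1 : K)) := by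
      simpa [LinearMap.lTensor_tmul, hf] using hxy
    have := h2 this
    have := congrArg (TensorProduct.rid K A) this
    simpa using this
  haveI : Nontrivial (A ⊗[K] L) := by
    constructor
    exact ⟨f 0, f 1, fun h => zero_ne_one (hfinj h)⟩
  set q := ringExpChar K with hq
  haveI hKq : ExpChar K q := ringExpChar.expChar K
  haveI hTq : ExpChar (A ⊗[K] L) q := by
    have : Function.Injective (algebraMap K (A ⊗[K] L)) := (algebraMap K (A ⊗[K] L)).injective
    exact expChar_of_injective_algebraMap this q
  -- key power lemma
  have key : ∀ x : A ⊗[K] L, ∃ n : ℕ, x ^ q ^ n ∈ Set.range f := by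
    intro x
    induction x using TensorProduct.induction_on with
    | zero =>
      exact ⟨1, 0, by rw [map_zero, zero_pow (Nat.pow_pos (n := 1) (expChar_pos K q)).ne']⟩
    | tmul a l =>
      obtain ⟨n, k, hk⟩ := IsPurelyInseparable.pow_mem K q l
      refine ⟨n, k • a ^ q ^ n, ?_⟩
      show (k • a ^ q ^ n) ⊗ₜ[K] (1 : L) = (a ⊗ₜ[K] l) ^ q ^ n
      rw [Algebra.TensorProduct.tmul_pow, ← hk, TensorProduct.smul_tmul,
        Algebra.algebraMap_eq_smul_one]
    | add x y hx hy =>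
      obtain ⟨m, a, ha⟩ := hx
      obtain ⟨n, b, hb⟩ := hy
      refine ⟨m + n, a ^ q ^ n + b ^ q ^ m, ?_⟩
      have : (x + y) ^ q ^ (m + n) = x ^ q ^ (m + n) + y ^ q ^ (m + n) :=
        add_pow_expChar_pow x y q (m + n)
      rw [this]
      have hx' : x ^ q ^ (m + n) = (x ^ q ^ m) ^ q ^ n := by
        rw [← pow_mul, ← pow_add]
      have hy' : y ^ q ^ (m + n) = (y ^ q ^ n) ^ q ^ m := by
        rw [← pow_mul, ← pow_add, Nat.add_comm]
      rw [hx', hy', ← ha, ← hb, ← map_pow, ← map_pow, ← map_add]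
  -- integrality
  have hint : f.IsIntegral := by
    intro x
    induction x using TensorProduct.induction_on with
    | zero => exact isIntegral_zero
    | tmul a l =>
      exact IsIntegral.tmul a (Algebra.IsIntegral.isIntegral l)
    | add x y hx hy => exact RingHom.IsIntegralElem.add f hx hy
  -- set up algebra structure
  haveI : Algebra.IsIntegral A (A ⊗[K] L) := ⟨hint⟩
  have halgmap : ∀ a : A, algebraMap A (A ⊗[K] L) a = f a := by
    intro a
    rw [Algebra.TensorProduct.algebraMap_apply]
    rfl
  rw [isHomeomorph_iff_continuous_isClosedMap_bijective]
  refine ⟨PrimeSpectrum.continuous_comap f,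
    PrimeSpectrum.isClosedMap_comap_of_isIntegral f hint, ?_, ?_⟩
  · -- injective
    intro p p' h
    ext x
    obtain ⟨n, a, ha⟩ := key x
    have hpos : 0 < q ^ n := Nat.pow_pos (n := n) (expChar_pos K q)
    have hmem : ∀ r : PrimeSpectrum (A ⊗[K] L),
        x ∈ r.asIdeal ↔ a ∈ (PrimeSpectrum.comap f r).asIdeal := by
      intro r
      rw [← r.2.pow_mem_iff_mem _ hpos, ← ha]
      exact Iff.rfl
    rw [hmem p, hmem p', h]
  · -- surjective
    intro p
    have hker : (⊥ : Ideal (A ⊗[K] L)).comap (algebraMap A (A ⊗[K] L)) ≤ p.asIdeal := by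
      intro a ha
      have : f a = 0 := by
        rw [← halgmap a]; exact Ideal.mem_bot.mp ha
      have : a = 0 := hfinj (by simpa using this)
      simp [this]
    obtain ⟨Q, -, hQprime, hQ⟩ :=
      Ideal.exists_ideal_over_prime_of_isIntegral p.asIdeal ⊥ hker
    refine ⟨⟨Q, hQprime⟩, ?_⟩
    ext a
    show f a ∈ Q ↔ a ∈ p.asIdeal
    rw [← hQ]
    rw [Ideal.mem_comap, halgmap a]
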